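/- Let n ≥ 1, let U be a real orthogonal n×n matrix and Λ a diagonal n×n matrix with Λ_ii > 0 for all i, and set S = U Λ Uᵀ. Define d(x', x'') = √((x' − x'')ᵀ S (x' − x'')) for x', x'' ∈ ℝⁿ. Let X ⊆ ℝⁿ, f : ℝⁿ → ℝ, ε ≥ 0 and δ* ≥ 0. Suppose that |f(x') − f(x'')| ≤ δ* holds for all x', x'' ∈ X satisfying the box constraints |(Uᵀx')_i − (Uᵀx'')_i| ≤ ε/√(Λ_ii) for every i. Then for every δ ≥ δ*, f is ε-δ-individually fair with respect to d on X, i.e., for all x', x'' ∈ X with d(x', x'') ≤ ε one has |f(x') − f(x'')| ≤ δ. -/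
import Mathlib


open Matrix

/-- Soundness of the box relaxation of the Mahalanobis fairness constraint:
a worst-case bound over the relaxed feasible set certifies ε-δ-IF. -/
theorem mahalanobis_relaxation_sound
    (n : ℕ) (hn : 1 ≤ n)
    (U : Matrix (Fin n) (Fin n) ℝ) (hU : U.transpose * U = 1)
    (lam : Fin n → ℝ) (hlam : ∀ i, 0 < lam i)
    (S : Matrix (Fin n) (Fin n) ℝ)
    (hS : S = U * Matrix.diagonal lam * U.transpose)
    (d : (Fin n → ℝ) → (Fin n → ℝ) → ℝ)
    (hd : ∀ x' x'', d x' x'' = Real.sqrt ((x' - x'') ⬝ᵥ S.mulVec (x' - x'')))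
    (X : Set (Fin n → ℝ)) (f : (Fin n → ℝ) → ℝ)
    (ε δstar : ℝ) (hε : 0 ≤ ε) (hδstar : 0 ≤ δstar)
    (hbound : ∀ x' ∈ X, ∀ x'' ∈ X,
      (∀ i, |U.transpose.mulVec x' i - U.transpose.mulVec x'' i|
              ≤ ε / Real.sqrt (lam i)) →
      |f x' - f x''| ≤ δstar) :
    ∀ δ, δstar ≤ δ →
      ∀ x' ∈ X, ∀ x'' ∈ X, d x' x'' ≤ ε → |f x' - f x''| ≤ δ := by
  intro δ hδ x' hx' x'' hx'' hdist
  refine le_trans (hbound x' hx' x'' hx'' ?_) hδ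
  intro i
  set v := x' - x'' with hv
  set y := U.transpose.mulVec v with hy
  -- quadratic form equals weighted sum of squares
  have hquad : v ⬝ᵥ S.mulVec v = ∑ j, lam j * (y j)^2 := by
    rw [hS, mul_assoc, ← Matrix.mulVec_mulVec, Matrix.dotProduct_mulVec,
      ← Matrix.mulVec_transpose, ← Matrix.mulVec_mulVec, ← hy]
    simp [dotProduct, Matrix.mulVec_diagonal, pow_two]
    exact Finset.sum_congr rfl fun j _ => by ring
  have hterm_nonneg : ∀ j, 0 ≤ lam j * (y j)^2 := fun j =>
    mul_nonneg (hlam j).le (sq_nonneg _)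
  have hsum_nonneg : 0 ≤ v ⬝ᵥ S.mulVec v := by
    rw [hquad]; exact Finset.sum_nonneg fun j _ => hterm_nonneg j
  have hle : v ⬝ᵥ S.mulVec v ≤ ε^2 := by
    have := hd x' x''
    rw [← hv] at this
    have h1 : Real.sqrt (v ⬝ᵥ S.mulVec v) ≤ ε := this ▸ hdist
    have := Real.sqrt_le_sqrt (Real.sq_sqrt hsum_nonneg ▸ pow_le_pow_left₀
      (Real.sqrt_nonneg _) h1 2)
    calc v ⬝ᵥ S.mulVec v = Real.sqrt (v ⬝ᵥ S.mulVec v) ^ 2 :=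
          (Real.sq_sqrt hsum_nonneg).symm
      _ ≤ ε ^ 2 := pow_le_pow_left₀ (Real.sqrt_nonneg _) h1 2
  have hi : lam i * (y i)^2 ≤ ε^2 := by
    calc lam i * (y i)^2
        ≤ ∑ j, lam j * (y j)^2 :=
          Finset.single_le_sum (fun j _ => hterm_nonneg j) (Finset.mem_univ i)
      _ = v ⬝ᵥ S.mulVec v := hquad.symm
      _ ≤ ε^2 := hle
  have hyi : (y i)^2 ≤ (ε / Real.sqrt (lam i))^2 := by
    rw [div_pow, Real.sq_sqrt (hlam i).le, le_div_iff₀ (hlam i), mul_comm]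
    exact hi
  have habs : |y i| ≤ ε / Real.sqrt (lam i) := by
    have hpos : 0 ≤ ε / Real.sqrt (lam i) :=
      div_nonneg hε (Real.sqrt_nonneg _)
    exact abs_le_of_sq_le_sq' (by simpa [sq_abs] using hyi) hpos |>.2
  have : U.transpose.mulVec x' i - U.transpose.mulVec x'' i = y i := by
    rw [hy, hv, Matrix.mulVec_sub]; simp
  rw [this]
  exact habs
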